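/- Let $\mathfrak{a}$ be a zero-dimensional monomial ideal in $R = K[x_1,\dots,x_n]$, and suppose there exist positive reals $a_1,\dots,a_n$ defining a supporting hyperplane $\sum_i u_i/a_i = 1$ of the Newton polytope of $\mathfrak{a}$ (so every exponent vector $u$ of a monomial in $\mathfrak{a}$ satisfies $\sum_i u_i/a_i \ge 1$). Let $\mu \in \mathbb{Q}_{>0}$ and $b_1,\dots,b_n \in \mathbb{Q}$ with $\mu \ge \max_i b_i$ and $\sum_{i=1}^n (\mu - b_i)/a_i \le 1$. Then $\dim_K(R/\mathfrak{a}) \ge \frac{n^n}{n!}\prod_{i=1}^n (\mu - b_i)$, with strict inequality if $n \ge 2$. -/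

import Mathlib

open Finset MvPolynomial

open Finset

/-- per-term bound for the Riemann sum. -/
lemma lem24_term (a : ℝ) (ha : 0 < a) (m k : ℕ) (hk : (k : ℝ) < a) :
    a / (m + 1) * (max (1 - (k : ℝ) / a) 0 ^ (m + 1)
      - max (1 - ((k : ℝ) + 1) / a) 0 ^ (m + 1)) ≤ (1 - (k : ℝ) / a) ^ m := by
  set x : ℝ := 1 - (k : ℝ) / a with hxdef
  have hx0 : 0 < x := by
    have : (k : ℝ) / a < 1 := (div_lt_one ha).2 hk
    simp [hxdef]; linarith
  have hmaxx : max x 0 = x := max_eq_left hx0.le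
  set y : ℝ := max (1 - ((k : ℝ) + 1) / a) 0 with hydef
  have hy0 : 0 ≤ y := le_max_right _ _
  have hyx : y ≤ x := by
    apply max_le _ hx0.le
    have : 0 < 1 / a := by positivity
    rw [hxdef]; rw [add_div]; linarith
  have hxy : x - y ≤ 1 / a := by
    have : 1 - ((k : ℝ) + 1) / a ≤ y := le_max_left _ _
    have h2 : ((k : ℝ) + 1) / a = (k : ℝ) / a + 1 / a := by ring
    rw [hxdef]; linarith [this, h2 ▸ this]
  have hx1 : x ≤ 1 := by
    have : 0 ≤ (k : ℝ) / a := by positivity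
    rw [hxdef]; linarith
  have hgeom : x ^ (m + 1) - y ^ (m + 1)
      = (∑ i ∈ range (m + 1), x ^ i * y ^ (m + 1 - 1 - i)) * (x - y) :=
    (geom_sum₂_mul x y (m + 1)).symm
  have hsum : (∑ i ∈ range (m + 1), x ^ i * y ^ (m + 1 - 1 - i)) ≤ (m + 1) * x ^ m := by
    calc (∑ i ∈ range (m + 1), x ^ i * y ^ (m + 1 - 1 - i))
        ≤ ∑ i ∈ range (m + 1), x ^ m := by
          apply Finset.sum_le_sum
          intro i hi
          have hi' : i < m + 1 := mem_range.1 hi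
          have : x ^ i * y ^ (m + 1 - 1 - i) ≤ x ^ i * x ^ (m + 1 - 1 - i) := by
            apply mul_le_mul_of_nonneg_left (pow_le_pow_left₀ hy0 hyx _) (by positivity)
          refine this.trans ?_
          rw [← pow_add]
          have : i + (m + 1 - 1 - i) = m := by omega
          rw [this]
      _ = (m + 1) * x ^ m := by rw [Finset.sum_const, card_range]; push_cast; ring
  rw [hmaxx]
  have hstep : x ^ (m + 1) - y ^ (m + 1) ≤ (m + 1) * x ^ m * (1 / a) := by
    rw [hgeom]
    have hxy0 : 0 ≤ x - y := by linarith
    calc (∑ i ∈ range (m + 1), x ^ i * y ^ (m + 1 - 1 - i)) * (x - y)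
        ≤ ((m : ℝ) + 1) * x ^ m * (x - y) := by
          apply mul_le_mul_of_nonneg_right hsum hxy0
      _ ≤ ((m : ℝ) + 1) * x ^ m * (1 / a) := by
          apply mul_le_mul_of_nonneg_left hxy (by positivity)
  calc a / (m + 1) * (x ^ (m + 1) - y ^ (m + 1))
      ≤ a / (m + 1) * ((m + 1) * x ^ m * (1 / a)) := by
        apply mul_le_mul_of_nonneg_left hstep (by positivity)
    _ = x ^ m := by field_simp


lemma lem24_term0_strict (a : ℝ) (ha : 0 < a) (m : ℕ) (hm : 1 ≤ m) :
    a / (m + 1) * (max (1 - (0 : ℝ) / a) 0 ^ (m + 1)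
      - max (1 - ((0 : ℝ) + 1) / a) 0 ^ (m + 1)) < (1 - (0 : ℝ) / a) ^ m := by
  have h1 : (1 - (0 : ℝ) / a) = 1 := by simp
  rw [h1, one_pow, max_eq_left (by norm_num : (0:ℝ) ≤ 1), one_pow]
  set y : ℝ := max (1 - ((0 : ℝ) + 1) / a) 0 with hydef
  have hy0 : 0 ≤ y := le_max_right _ _
  have hy1 : y < 1 := by
    apply max_lt _ one_pos
    have : 0 < 1 / a := by positivity
    rw [zero_add]; linarith
  have hm' : (0 : ℝ) < m := by exact_mod_cast Nat.lt_of_lt_of_le Nat.zero_lt_one hm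
  have hgeom : 1 - y ^ (m + 1) = (1 - y) * ∑ i ∈ range (m + 1), y ^ i := by
    have h := geom_sum_mul y (m + 1)
    linear_combination h
  have hsum : (∑ i ∈ range (m + 1), y ^ i) < m + 1 := by
    calc (∑ i ∈ range (m + 1), y ^ i) = 1 + ∑ i ∈ range m, y ^ (i + 1) := by
          rw [Finset.sum_range_succ'] ; simp [add_comm]
      _ < 1 + m := by
          have hlt : ∀ i ∈ range m, y ^ (i + 1) ≤ y := by
            intro i _
            calc y ^ (i + 1) ≤ y ^ 1 := pow_le_pow_of_le_one hy0 hy1.le (by omega)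
              _ = y := pow_one y
          have : ∑ i ∈ range m, y ^ (i + 1) < m := by
            calc ∑ i ∈ range m, y ^ (i + 1) ≤ ∑ i ∈ range m, y := Finset.sum_le_sum hlt
              _ = m * y := by rw [Finset.sum_const, card_range]; ring
              _ < m * 1 := mul_lt_mul_of_pos_left hy1 hm'
              _ = m := mul_one _
          linarith
      _ = m + 1 := by ring
  rcases eq_or_lt_of_le hy0 with h0 | h0
  · -- y = 0, so a ≤ 1
    have hale : a ≤ 1 := by
      by_contra hcon
      push_neg at hcon
      have : 0 < 1 - (0 + 1 : ℝ) / a := by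
        rw [zero_add]
        have : 1 / a < 1 := by rw [div_lt_one ha]; linarith
        linarith
      have h2 : 0 < y := lt_of_lt_of_le this (le_max_left _ _)
      linarith
    rw [← h0, zero_pow (by omega), sub_zero, mul_one]
    rw [div_lt_one (by positivity)]
    linarith
  · -- y = 1 - 1/a
    have hy' : y = 1 - 1 / a := by
      rcases max_cases (1 - ((0:ℝ) + 1) / a) 0 with ⟨h, _⟩ | ⟨h, hle⟩
      · rw [hydef, h]; norm_num
      · exfalso; rw [hydef, h] at h0; exact lt_irrefl _ h0
    have hay : a * (1 - y) = 1 := by rw [hy']; field_simp; ring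
    calc a / (m + 1) * (1 - y ^ (m + 1))
        = a * (1 - y) * ((∑ i ∈ range (m + 1), y ^ i) / (m + 1)) := by
          rw [hgeom]; field_simp
      _ = (∑ i ∈ range (m + 1), y ^ i) / (m + 1) := by rw [hay, one_mul]
      _ < 1 := by rw [div_lt_one (by positivity)]; exact hsum

lemma lem24_telescope (a : ℝ) (ha : 0 < a) (m : ℕ) :
    ∑ k ∈ range ⌈a⌉₊, a / (m + 1) * (max (1 - (k : ℝ) / a) 0 ^ (m + 1)
      - max (1 - ((k : ℝ) + 1) / a) 0 ^ (m + 1)) = a / (m + 1) := by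
  have h : ∀ k : ℕ, a / (m + 1) * (max (1 - (k : ℝ) / a) 0 ^ (m + 1)
      - max (1 - ((k : ℝ) + 1) / a) 0 ^ (m + 1))
      = (fun j : ℕ => a / (m + 1) * max (1 - (j : ℝ) / a) 0 ^ (m + 1)) k
        - (fun j : ℕ => a / (m + 1) * max (1 - (j : ℝ) / a) 0 ^ (m + 1)) (k + 1) := by
    intro k; push_cast; ring
  rw [Finset.sum_congr rfl fun k _ => h k, Finset.sum_range_sub']
  have h0 : max (1 - (0 : ℕ) / a) 0 = 1 := by
    norm_num
  have hN : max (1 - (⌈a⌉₊ : ℝ) / a) 0 = 0 := by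
    apply max_eq_right
    have : a ≤ (⌈a⌉₊ : ℝ) := Nat.le_ceil a
    have : 1 ≤ (⌈a⌉₊ : ℝ) / a := by rw [le_div_iff₀ ha]; linarith
    linarith
  simp only [h0, hN]
  rw [one_pow, zero_pow (by omega), mul_one, mul_zero, sub_zero]

lemma lem24_riemann_le (a : ℝ) (ha : 0 < a) (m : ℕ) :
    a / (m + 1) ≤ ∑ k ∈ range ⌈a⌉₊, (1 - (k : ℝ) / a) ^ m := by
  rw [← lem24_telescope a ha m]
  apply Finset.sum_le_sum
  intro k hk
  exact lem24_term a ha m k (Nat.lt_ceil.1 (mem_range.1 hk))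

lemma lem24_riemann_lt (a : ℝ) (ha : 0 < a) (m : ℕ) (hm : 1 ≤ m) :
    a / (m + 1) < ∑ k ∈ range ⌈a⌉₊, (1 - (k : ℝ) / a) ^ m := by
  rw [← lem24_telescope a ha m]
  apply Finset.sum_lt_sum
  · intro k hk
    exact lem24_term a ha m k (Nat.lt_ceil.1 (mem_range.1 hk))
  · refine ⟨0, mem_range.2 (Nat.ceil_pos.2 ha), ?_⟩
    have := lem24_term0_strict a ha m hm
    simpa using this

open Classical in
noncomputable def lem24latt (n : ℕ) (a : Fin n → ℝ) : Finset (Fin n → ℕ) :=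
  (Fintype.piFinset fun i => Finset.range ⌈a i⌉₊).filter fun u => ∑ i, (u i : ℝ) / a i < 1

lemma lem24_mem_latt {n : ℕ} {a : Fin n → ℝ} (ha : ∀ i, 0 < a i) (u : Fin n → ℕ) :
    u ∈ lem24latt n a ↔ ∑ i, (u i : ℝ) / a i < 1 := by
  classical
  unfold lem24latt
  rw [Finset.mem_filter]
  constructor
  · exact fun h => h.2
  · intro h
    refine ⟨?_, h⟩
    rw [Fintype.mem_piFinset]
    intro i
    rw [Finset.mem_range, Nat.lt_ceil]
    have h1 : (u i : ℝ) / a i ≤ ∑ j, (u j : ℝ) / a j := by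
      apply Finset.single_le_sum (f := fun j => (u j : ℝ) / a j) _ (mem_univ i)
      intro j _; exact div_nonneg (Nat.cast_nonneg _) (ha j).le
    have := lt_of_le_of_lt h1 h
    rwa [div_lt_one (ha i)] at this

lemma lem24_zero_mem {n : ℕ} (a : Fin n → ℝ) (ha : ∀ i, 0 < a i) :
    (fun _ => 0 : Fin n → ℕ) ∈ lem24latt n a := by
  rw [lem24_mem_latt ha]
  simp

lemma lem24_step (n : ℕ) (a : Fin (n + 1) → ℝ) (ha : ∀ i, 0 < a i)
    (IH : ∀ a' : Fin n → ℝ, (∀ i, 0 < a' i) →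
      (∏ i, a' i) / (n.factorial : ℝ) ≤ ((lem24latt n a').card : ℝ)) :
    (∏ i : Fin n, a i.succ) / (n.factorial : ℝ)
        * ∑ k ∈ range ⌈a 0⌉₊, (1 - (k : ℝ) / a 0) ^ n
      ≤ ((lem24latt (n + 1) a).card : ℝ) := by
  classical
  set s : ℕ → ℝ := fun k => 1 - (k : ℝ) / a 0 with hs
  have hspos : ∀ k ∈ range ⌈a 0⌉₊, 0 < s k := by
    intro k hk
    have : (k : ℝ) < a 0 := Nat.lt_ceil.1 (mem_range.1 hk)
    have : (k : ℝ) / a 0 < 1 := (div_lt_one (ha 0)).2 this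
    simp [hs]; linarith
  -- scaled legs
  set A : ℕ → Fin n → ℝ := fun k i => s k * a i.succ with hA
  have hApos : ∀ k ∈ range ⌈a 0⌉₊, ∀ i, 0 < A k i := fun k hk i =>
    mul_pos (hspos k hk) (ha i.succ)
  -- injection from sigma into latt (n+1) a
  have hcard : ∑ k ∈ range ⌈a 0⌉₊, ((lem24latt n (A k)).card)
      ≤ (lem24latt (n + 1) a).card := by
    rw [← Finset.card_sigma]
    apply Finset.card_le_card_of_injOn (fun p => Fin.cons p.1 p.2)
    · rintro ⟨k, u⟩ hp
      rw [Finset.mem_coe, Finset.mem_sigma] at hp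
      obtain ⟨hk, hu⟩ := hp
      rw [Finset.mem_coe, lem24_mem_latt ha]
      rw [Fin.sum_univ_succ]
      simp only [Fin.cons_zero, Fin.cons_succ]
      have hu' : ∑ i, (u i : ℝ) / A k i < 1 := (lem24_mem_latt (hApos k hk) u).1 hu
      have hsk := hspos k hk
      have key : ∑ i, (u i : ℝ) / a i.succ < s k := by
        have : ∑ i, (u i : ℝ) / a i.succ = s k * ∑ i, (u i : ℝ) / A k i := by
          rw [Finset.mul_sum]
          apply Finset.sum_congr rfl
          intro i _
          show (u i : ℝ) / a i.succ = s k * ((u i : ℝ) / (s k * a i.succ))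
          rw [← mul_div_assoc]
          exact (mul_div_mul_left _ _ hsk.ne').symm
        rw [this]
        calc s k * ∑ i, (u i : ℝ) / A k i < s k * 1 := by
              exact mul_lt_mul_of_pos_left hu' hsk
          _ = s k := mul_one _
      have : (k : ℝ) / a 0 + s k = 1 := by simp [hs]
      linarith
    · rintro ⟨k, u⟩ hp ⟨k', u'⟩ hp' heq
      have h0 : k = k' := by
        have := congrFun heq 0
        simpa using this
      subst h0
      have : u = u' := by
        funext i
        have := congrFun heq i.succ
        simpa using this
      simp [this]
  -- now the numeric chain
  calc (∏ i : Fin n, a i.succ) / (n.factorial : ℝ) * ∑ k ∈ range ⌈a 0⌉₊, s k ^ n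
      = ∑ k ∈ range ⌈a 0⌉₊, (∏ i : Fin n, a i.succ) / (n.factorial : ℝ) * s k ^ n := by
        rw [Finset.mul_sum]
    _ ≤ ∑ k ∈ range ⌈a 0⌉₊, ((lem24latt n (A k)).card : ℝ) := by
        apply Finset.sum_le_sum
        intro k hk
        have := IH (A k) (hApos k hk)
        have hprod : ∏ i, A k i = s k ^ n * ∏ i : Fin n, a i.succ := by
          rw [hA]
          simp only []
          rw [Finset.prod_mul_distrib, Finset.prod_const, card_univ, Fintype.card_fin]
        rw [hprod] at this
        calc (∏ i : Fin n, a i.succ) / (n.factorial : ℝ) * s k ^ n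
            = s k ^ n * (∏ i : Fin n, a i.succ) / (n.factorial : ℝ) := by ring
          _ ≤ _ := this
    _ ≤ ((lem24latt (n + 1) a).card : ℝ) := by exact_mod_cast hcard

lemma lem24_count_ge (n : ℕ) (a : Fin n → ℝ) (ha : ∀ i, 0 < a i) :
    (∏ i, a i) / (n.factorial : ℝ) ≤ ((lem24latt n a).card : ℝ) := by
  induction n with
  | zero =>
    simp only [Finset.univ_eq_empty, Finset.prod_empty, Nat.factorial_zero, Nat.cast_one,
      div_one]
    have : (fun _ => 0 : Fin 0 → ℕ) ∈ lem24latt 0 a := lem24_zero_mem a ha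
    have := Finset.card_pos.2 ⟨_, this⟩
    exact_mod_cast this
  | succ n IH =>
    have hstep := lem24_step n a ha (fun a' ha' => IH a' ha')
    have hrie := lem24_riemann_le (a 0) (ha 0) n
    have hpos : 0 < (∏ i : Fin n, a i.succ) / (n.factorial : ℝ) := by
      have : 0 < ∏ i : Fin n, a i.succ := Finset.prod_pos fun i _ => ha i.succ
      positivity
    calc (∏ i, a i) / ((n + 1).factorial : ℝ)
        = (∏ i : Fin n, a i.succ) / (n.factorial : ℝ) * (a 0 / (n + 1)) := by
          rw [Fin.prod_univ_succ, Nat.factorial_succ]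
          push_cast
          field_simp
      _ ≤ (∏ i : Fin n, a i.succ) / (n.factorial : ℝ)
            * ∑ k ∈ range ⌈a 0⌉₊, (1 - (k : ℝ) / a 0) ^ n := by
          exact mul_le_mul_of_nonneg_left hrie hpos.le
      _ ≤ _ := hstep

lemma lem24_count_gt (n : ℕ) (hn : 2 ≤ n) (a : Fin n → ℝ) (ha : ∀ i, 0 < a i) :
    (∏ i, a i) / (n.factorial : ℝ) < ((lem24latt n a).card : ℝ) := by
  obtain ⟨m, rfl⟩ : ∃ m, n = m + 1 := ⟨n - 1, by omega⟩
  have hm : 1 ≤ m := by omega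
  have hstep := lem24_step m a ha (fun a' ha' => lem24_count_ge m a' ha')
  have hrie := lem24_riemann_lt (a 0) (ha 0) m hm
  have hpos : 0 < (∏ i : Fin m, a i.succ) / (m.factorial : ℝ) := by
    have : 0 < ∏ i : Fin m, a i.succ := Finset.prod_pos fun i _ => ha i.succ
    positivity
  calc (∏ i, a i) / ((m + 1).factorial : ℝ)
      = (∏ i : Fin m, a i.succ) / (m.factorial : ℝ) * (a 0 / (m + 1)) := by
        rw [Fin.prod_univ_succ, Nat.factorial_succ]
        push_cast
        field_simp
    _ < (∏ i : Fin m, a i.succ) / (m.factorial : ℝ)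
          * ∑ k ∈ range ⌈a 0⌉₊, (1 - (k : ℝ) / a 0) ^ m := by
        exact mul_lt_mul_of_pos_left hrie hpos
    _ ≤ _ := hstep

lemma lem24_amgm (n : ℕ) (hn : 1 ≤ n) (a c : Fin n → ℝ) (ha : ∀ i, 0 < a i)
    (hc : ∀ i, 0 ≤ c i) (hsum : ∑ i, c i / a i ≤ 1) :
    ((n : ℝ) ^ n / (n.factorial : ℝ)) * ∏ i, c i ≤ (∏ i, a i) / (n.factorial : ℝ) := by
  have hn' : (0 : ℝ) < n := by exact_mod_cast Nat.lt_of_lt_of_le Nat.zero_lt_one hn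
  set z : Fin n → ℝ := fun i => c i / a i with hz
  have hz0 : ∀ i, 0 ≤ z i := fun i => div_nonneg (hc i) (ha i).le
  have hP := Real.geom_mean_le_arith_mean_weighted univ (fun _ => (n : ℝ)⁻¹) z
    (fun i _ => by positivity) (by
      rw [Finset.sum_const, card_univ, Fintype.card_fin, nsmul_eq_mul]
      field_simp) (fun i _ => hz0 i)
  have hP2 : ∑ i, (n : ℝ)⁻¹ * z i ≤ (n : ℝ)⁻¹ := by
    rw [← Finset.mul_sum]
    calc (n : ℝ)⁻¹ * ∑ i, z i ≤ (n : ℝ)⁻¹ * 1 :=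
          mul_le_mul_of_nonneg_left hsum (by positivity)
      _ = (n : ℝ)⁻¹ := mul_one _
  set P : ℝ := ∏ i, z i ^ (n : ℝ)⁻¹ with hPdef
  have hPn : P ≤ (n : ℝ)⁻¹ := le_trans hP hP2
  have hP0 : 0 ≤ P := Finset.prod_nonneg fun i _ => Real.rpow_nonneg (hz0 i) _
  have hprodz : ∏ i, z i = P ^ n := by
    rw [hPdef, ← Finset.prod_pow]
    apply Finset.prod_congr rfl
    intro i _
    rw [← Real.rpow_natCast (z i ^ (n : ℝ)⁻¹) n, ← Real.rpow_mul (hz0 i)]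
    rw [inv_mul_cancel₀ (ne_of_gt hn'), Real.rpow_one]
  have hzc : ∏ i, c i = (∏ i, a i) * ∏ i, z i := by
    rw [← Finset.prod_mul_distrib]
    apply Finset.prod_congr rfl
    intro i _
    show c i = a i * (c i / a i)
    rw [mul_div_cancel₀ _ (ne_of_gt (ha i))]
  have hzbound : ∏ i, z i ≤ ((n : ℝ)⁻¹) ^ n := by
    rw [hprodz]
    exact pow_le_pow_left₀ hP0 hPn n
  have hapos : 0 < ∏ i, a i := Finset.prod_pos fun i _ => ha i
  calc ((n : ℝ) ^ n / (n.factorial : ℝ)) * ∏ i, c i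
      = ((n : ℝ) ^ n / (n.factorial : ℝ)) * ((∏ i, a i) * ∏ i, z i) := by rw [hzc]
    _ ≤ ((n : ℝ) ^ n / (n.factorial : ℝ)) * ((∏ i, a i) * ((n : ℝ)⁻¹) ^ n) := by
        apply mul_le_mul_of_nonneg_left _ (by positivity)
        exact mul_le_mul_of_nonneg_left hzbound hapos.le
    _ = (∏ i, a i) / (n.factorial : ℝ) := by
        have hnn : ((n : ℝ)) ^ n * ((n : ℝ)⁻¹) ^ n = 1 := by
          rw [← mul_pow, mul_inv_cancel₀ (ne_of_gt hn'), one_pow]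
        field_simp at hnn ⊢
        nlinarith [hnn]

lemma lem24_card_le_finrank (K : Type*) [Field K] (n : ℕ)
    (I : Ideal (MvPolynomial (Fin n) K))
    (hmono : ∀ f ∈ I, ∀ u ∈ f.support, (monomial u (1 : K)) ∈ I)
    (hfin : FiniteDimensional K (MvPolynomial (Fin n) K ⧸ I))
    (a : Fin n → ℝ) (ha : ∀ i, 0 < a i)
    (hNewton : ∀ u : Fin n →₀ ℕ, (monomial u (1 : K)) ∈ I →
      1 ≤ ∑ i, (u i : ℝ) / a i) :
    ((lem24latt n a).card : ℝ)
      ≤ (Module.finrank K (MvPolynomial (Fin n) K ⧸ I) : ℝ) := by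
  classical
  set d : ↥(lem24latt n a) → (Fin n →₀ ℕ) :=
    fun u => Finsupp.equivFunOnFinite.symm u.1 with hd
  have hdinj : Function.Injective d :=
    Finsupp.equivFunOnFinite.symm.injective.comp Subtype.coe_injective
  have hdapp : ∀ (u : ↥(lem24latt n a)) (i : Fin n), d u i = u.1 i := by
    intro u i; simp [hd]
  set v : ↥(lem24latt n a) → (MvPolynomial (Fin n) K ⧸ I) :=
    fun u => Ideal.Quotient.mkₐ K I (monomial (d u) (1 : K)) with hv
  have hli : LinearIndependent K v := by
    rw [linearIndependent_iff']
    intro s g hsum i₀ hi₀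
    by_contra hg
    set f : MvPolynomial (Fin n) K := ∑ i ∈ s, g i • monomial (d i) (1 : K) with hf
    have hfI : f ∈ I := by
      rw [← Ideal.Quotient.eq_zero_iff_mem]
      have : (Ideal.Quotient.mkₐ K I) f = ∑ i ∈ s, g i • v i := by
        rw [hf, map_sum]
        apply Finset.sum_congr rfl
        intro i _
        rw [map_smul]
      show Ideal.Quotient.mk I f = 0
      rw [← Ideal.Quotient.mkₐ_eq_mk K, this, hsum]
    have hcoeff : coeff (d i₀) f = g i₀ := by
      rw [hf, coeff_sum]
      rw [Finset.sum_eq_single i₀]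
      · rw [coeff_smul, coeff_monomial, if_pos rfl, smul_eq_mul, mul_one]
      · intro i hi hne
        rw [coeff_smul, coeff_monomial, if_neg (fun h => hne (hdinj h)), smul_eq_mul,
          mul_zero]
      · intro h; exact absurd hi₀ h
    have hmem : d i₀ ∈ f.support := by
      rw [MvPolynomial.mem_support_iff, hcoeff]
      exact hg
    have hmonI : monomial (d i₀) (1 : K) ∈ I := hmono f hfI _ hmem
    have h1 : (1 : ℝ) ≤ ∑ i, ((d i₀) i : ℝ) / a i := hNewton _ hmonI
    have h2 : ∑ i, ((i₀ : Fin n → ℕ) i : ℝ) / a i < 1 :=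
      (lem24_mem_latt ha _).1 i₀.2
    have : ∑ i, ((d i₀) i : ℝ) / a i = ∑ i, ((i₀ : Fin n → ℕ) i : ℝ) / a i := by
      apply Finset.sum_congr rfl
      intro i _
      rw [hdapp]
    linarith [h1, this ▸ h2]
  have hcard := hli.fintype_card_le_finrank
  rw [Fintype.card_coe] at hcard
  exact_mod_cast hcard


/-- Combinatorial content of Lemma 2.4: if the hyperplane `∑ uᵢ/aᵢ = 1`
supports the Newton polytope of a zero-dimensional monomial ideal `𝔞`, and
`μ ∈ ℚ_{>0}`, `bᵢ ∈ ℚ` satisfy `μ ≥ max bᵢ` and `∑ (μ - bᵢ)/aᵢ ≤ 1`, then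
`dim_K R/𝔞 ≥ (nⁿ/n!) ∏ (μ - bᵢ)`, with strict inequality if `n ≥ 2`. -/
theorem stmt6 (K : Type*) [Field K] (n : ℕ) (hn : 1 ≤ n)
    (I : Ideal (MvPolynomial (Fin n) K))
    (hmono : ∀ f ∈ I, ∀ u ∈ f.support, (monomial u (1 : K)) ∈ I)
    (hfin : FiniteDimensional K (MvPolynomial (Fin n) K ⧸ I))
    (hI : I ≠ ⊤)
    (a : Fin n → ℝ) (ha : ∀ i, 0 < a i)
    (hNewton : ∀ u : Fin n →₀ ℕ, (monomial u (1 : K)) ∈ I →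
      1 ≤ ∑ i, (u i : ℝ) / a i)
    (μ : ℚ) (hμ : 0 < μ) (b : Fin n → ℚ) (hb : ∀ i, b i ≤ μ)
    (hfacet : ∑ i, ((μ : ℝ) - (b i : ℝ)) / a i ≤ 1) :
    ((n : ℝ) ^ n / (Nat.factorial n : ℝ)) * ∏ i, ((μ : ℝ) - (b i : ℝ)) ≤
      (Module.finrank K (MvPolynomial (Fin n) K ⧸ I) : ℝ) ∧
    (2 ≤ n →
      ((n : ℝ) ^ n / (Nat.factorial n : ℝ)) * ∏ i, ((μ : ℝ) - (b i : ℝ)) <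
        (Module.finrank K (MvPolynomial (Fin n) K ⧸ I) : ℝ)) := by
  have hc : ∀ i, 0 ≤ (μ : ℝ) - (b i : ℝ) := by
    intro i
    have : ((b i : ℝ)) ≤ (μ : ℝ) := by exact_mod_cast hb i
    linarith
  have key1 := lem24_amgm n hn a (fun i => (μ : ℝ) - (b i : ℝ)) ha hc hfacet
  have key2 := lem24_count_ge n a ha
  have key3 := lem24_card_le_finrank K n I hmono hfin a ha hNewton
  constructor
  · linarith
  · intro h2n
    have key2' := lem24_count_gt n h2n a ha
    linarith
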